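/- Let l be a prime with l ≥ 19, let ζ = exp(2πi/l) ∈ ℂ, and define ψ⁺(x) = ∏ (x − ζ^i) over those i ∈ {1, …, l−1} that are quadratic residues modulo l, and ψ⁻(x) = ∏ (x − ζ^i) over those i ∈ {1, …, l−1} that are quadratic non-residues modulo l. Then for every integer x with x ≥ l², the quantity P(x) = ψ⁺(x) + ψ⁻(x) satisfies |P(x) − 2·x^((l−1)/2) − x^((l−3)/2)| < x^((l−3)/2)/2, where |·| is the complex absolute value. -/

import Mathlib

open scoped Classical

lemma aux_prod_sub_one {ι : Type*} (S : Finset ι) (w : ι → ℂ) :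
    ‖∏ i ∈ S, (1 + w i) - 1‖ ≤ ∏ i ∈ S, (1 + ‖w i‖) - 1 := by
  induction S using Finset.induction_on with
  | empty => simp
  | @insert a S ha ih =>
    rw [Finset.prod_insert ha, Finset.prod_insert ha]
    have hP : ‖∏ i ∈ S, (1 + w i)‖ ≤ ∏ i ∈ S, (1 + ‖w i‖) := by
      rw [norm_prod]
      apply Finset.prod_le_prod (fun i _ => norm_nonneg _)
      intro i _
      calc ‖1 + w i‖ ≤ ‖1‖ + ‖w i‖ := norm_add_le _ _
        _ = 1 + ‖w i‖ := by simp
    have key : (1 + w a) * ∏ i ∈ S, (1 + w i) - 1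
        = (∏ i ∈ S, (1 + w i) - 1) + w a * ∏ i ∈ S, (1 + w i) := by ring
    rw [key]
    calc ‖_‖ ≤ ‖∏ i ∈ S, (1 + w i) - 1‖
          + ‖w a‖ * ‖∏ i ∈ S, (1 + w i)‖ := by
          exact le_trans (norm_add_le _ _) (by rw [norm_mul])
      _ ≤ (∏ i ∈ S, (1 + ‖w i‖) - 1)
          + ‖w a‖ * ∏ i ∈ S, (1 + ‖w i‖) := by
          gcongr <;> first
            | exact norm_nonneg _
            | exact hP
            | exact ih
      _ = (1 + ‖w a‖) * ∏ i ∈ S, (1 + ‖w i‖) - 1 := by ring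

lemma aux_prod_sub_sum {ι : Type*} (S : Finset ι) (w : ι → ℂ) :
    ‖∏ i ∈ S, (1 + w i) - 1 - ∑ i ∈ S, w i‖
      ≤ ∏ i ∈ S, (1 + ‖w i‖) - 1 - ∑ i ∈ S, ‖w i‖ := by
  induction S using Finset.induction_on with
  | empty => simp
  | @insert a S ha ih =>
    rw [Finset.prod_insert ha, Finset.prod_insert ha, Finset.sum_insert ha,
      Finset.sum_insert ha]
    have key : (1 + w a) * ∏ i ∈ S, (1 + w i) - 1 - (w a + ∑ i ∈ S, w i)
        = (∏ i ∈ S, (1 + w i) - 1 - ∑ i ∈ S, w i) + w a * (∏ i ∈ S, (1 + w i) - 1) := by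
      ring
    rw [key]
    calc ‖_‖ ≤ ‖∏ i ∈ S, (1 + w i) - 1 - ∑ i ∈ S, w i‖
          + ‖w a‖ * ‖∏ i ∈ S, (1 + w i) - 1‖ := by
          exact le_trans (norm_add_le _ _) (by rw [norm_mul])
      _ ≤ (∏ i ∈ S, (1 + ‖w i‖) - 1 - ∑ i ∈ S, ‖w i‖)
          + ‖w a‖ * (∏ i ∈ S, (1 + ‖w i‖) - 1) := by
          gcongr <;> first
            | exact norm_nonneg _
            | exact aux_prod_sub_one S w
            | exact ih
      _ = (1 + ‖w a‖) * ∏ i ∈ S, (1 + ‖w i‖) - 1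
          - (‖w a‖ + ∑ i ∈ S, ‖w i‖) := by ring

lemma aux_pow_le (t : ℝ) (ht : 0 ≤ t) : ∀ n : ℕ, n * t ≤ 1 →
    (1 + t) ^ n ≤ 1 + n * t + (n : ℝ)^2 * t^2 := by
  intro n
  induction n with
  | zero => intro _; simp
  | succ n ih =>
    intro h
    have hc : (0:ℝ) ≤ n := Nat.cast_nonneg n
    have hn : (n : ℝ) * t ≤ 1 := by
      push_cast at h; nlinarith
    have hih := ih hn
    have h5 : (n:ℝ)^2 * t ≤ n := by nlinarith
    have h3 : (n:ℝ)^2 * t^3 ≤ (n:ℝ) * t^2 := by nlinarith [sq_nonneg t]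
    have h1 : (1 + t) ^ (n + 1) = (1 + t) ^ n * (1 + t) := by ring
    rw [h1]
    have h2 : (1 + t) ^ n * (1 + t) ≤ (1 + n * t + (n:ℝ)^2 * t^2) * (1 + t) := by
      nlinarith
    push_cast
    nlinarith [sq_nonneg t]

lemma aux_card_squares (l : ℕ) [hF : Fact l.Prime] (hl2 : 2 < l) :
    2 * (Finset.univ.filter (fun a : ZMod l => a ≠ 0 ∧ IsSquare a)).card = l - 1 := by
  have hchar : ringChar (ZMod l) ≠ 2 := by
    rw [ZMod.ringChar_zmod_n]; omega
  have hsum := quadraticChar_sum_zero (F := ZMod l) hchar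
  set U := Finset.univ.filter (fun a : ZMod l => a ≠ 0) with hU
  set T := U.filter (fun a : ZMod l => IsSquare a) with hT
  set N := U.filter (fun a : ZMod l => ¬ IsSquare a) with hN
  have h0 : ∑ a : ZMod l, quadraticChar (ZMod l) a
      = ∑ a ∈ U, quadraticChar (ZMod l) a := by
    refine (Finset.sum_subset (Finset.subset_univ U) ?_).symm
    intro a _ ha
    have : a = 0 := by
      by_contra h
      exact ha (by simp [hU, h])
    simp [this]
  have h1 : ∑ a ∈ U, quadraticChar (ZMod l) a
      = (∑ a ∈ T, quadraticChar (ZMod l) a) + (∑ a ∈ N, quadraticChar (ZMod l) a) := by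
    rw [hT, hN, Finset.sum_filter_add_sum_filter_not]
  have hTval : ∑ a ∈ T, quadraticChar (ZMod l) a = (T.card : ℤ) := by
    rw [Finset.sum_congr rfl (fun a ha => ?_), Finset.sum_const, nsmul_eq_mul, mul_one]
    have ha' : a ≠ 0 ∧ IsSquare a := by
      simp only [hT, hU, Finset.mem_filter, Finset.mem_univ, true_and] at ha
      exact ⟨ha.1, ha.2⟩
    exact (quadraticChar_one_iff_isSquare ha'.1).mpr ha'.2
  have hNval : ∑ a ∈ N, quadraticChar (ZMod l) a = -(N.card : ℤ) := by
    rw [Finset.sum_congr rfl (fun a ha => ?_), Finset.sum_const, nsmul_eq_mul, mul_neg_one]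
    have ha' : a ≠ 0 ∧ ¬ IsSquare a := by
      simp only [hN, hU, Finset.mem_filter, Finset.mem_univ, true_and] at ha
      exact ⟨ha.1, ha.2⟩
    exact quadraticChar_neg_one_iff_not_isSquare.mpr ha'.2
  have hcardeq : T.card = N.card := by
    have : (T.card : ℤ) = (N.card : ℤ) := by
      rw [h0, h1, hTval, hNval] at hsum; omega
    exact_mod_cast this
  have hUcard : U.card = l - 1 := by
    have : U = Finset.univ.erase 0 := by
      rw [hU, Finset.filter_ne']
    rw [this, Finset.card_erase_of_mem (Finset.mem_univ _), Finset.card_univ, ZMod.card]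
  have hsplitcard : T.card + N.card = U.card := by
    rw [hT, hN, Finset.card_filter_add_card_filter_not]
  have hfinal : Finset.univ.filter (fun a : ZMod l => a ≠ 0 ∧ IsSquare a) = T := by
    rw [hT, hU, Finset.filter_filter]
  rw [hfinal]
  omega

lemma aux_card_ico (l : ℕ) [hF : Fact l.Prime] (hl2 : 2 < l)
    (h2 : 2 * (Finset.univ.filter (fun a : ZMod l => a ≠ 0 ∧ IsSquare a)).card = l - 1) :
    2 * ((Finset.Ico 1 l).filter (fun i : ℕ => IsSquare ((i : ZMod l)))).card = l - 1 := by
  haveI : NeZero l := ⟨by omega⟩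
  rw [← h2]
  congr 1
  refine Finset.card_bij
    (s := (Finset.Ico 1 l).filter (fun i : ℕ => IsSquare ((i : ZMod l))))
    (t := Finset.univ.filter (fun a : ZMod l => a ≠ 0 ∧ IsSquare a))
    (fun i _ => (i : ZMod l)) ?_ ?_ ?_
  · intro a ha
    simp only [Finset.mem_filter, Finset.mem_Ico] at ha
    refine Finset.mem_filter.mpr ⟨Finset.mem_univ _, ?_, ha.2⟩
    rw [Ne, ZMod.natCast_eq_zero_iff]
    intro hdvd
    have := Nat.le_of_dvd (by omega) hdvd
    omega
  · intro a ha b hb hab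
    simp only [Finset.mem_filter, Finset.mem_Ico] at ha hb
    have := congrArg ZMod.val hab
    rwa [ZMod.val_cast_of_lt ha.1.2, ZMod.val_cast_of_lt hb.1.2] at this
  · intro b hb
    simp only [Finset.mem_filter, Finset.mem_univ, true_and] at hb
    refine ⟨b.val, ?_, ?_⟩
    · simp only [Finset.mem_filter, Finset.mem_Ico]
      have hlt := ZMod.val_lt b
      have hne : b.val ≠ 0 := by
        rw [Ne, ZMod.val_eq_zero]; exact hb.1
      refine ⟨⟨by omega, hlt⟩, ?_⟩
      rw [ZMod.natCast_val, ZMod.cast_id]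
      exact hb.2
    · rw [ZMod.natCast_val, ZMod.cast_id]

open scoped Classical in
theorem psi_sum_estimate
    (l : ℕ) (hl : l.Prime) (hl19 : 19 ≤ l)
    (ζ : ℂ) (hζ : ζ = Complex.exp (2 * Real.pi * Complex.I / l))
    (ψp ψm : ℤ → ℂ)
    (hψp : ∀ x : ℤ, ψp x = ∏ i ∈ (Finset.Ico 1 l).filter
        (fun i => ¬ l ∣ i ∧ ∃ a : ℕ, i ≡ a ^ 2 [MOD l]), ((x : ℂ) - ζ ^ i))
    (hψm : ∀ x : ℤ, ψm x = ∏ i ∈ (Finset.Ico 1 l).filter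
        (fun i => ¬ (¬ l ∣ i ∧ ∃ a : ℕ, i ≡ a ^ 2 [MOD l])), ((x : ℂ) - ζ ^ i))
    (x : ℤ) (hx : (l : ℤ) ^ 2 ≤ x) :
    ‖ψp x + ψm x - 2 * (x : ℂ) ^ ((l - 1) / 2) - (x : ℂ) ^ ((l - 3) / 2)‖
      < (x : ℝ) ^ ((l - 3) / 2) / 2 := by
  haveI : Fact l.Prime := ⟨hl⟩
  have hl2 : 2 < l := by omega
  obtain ⟨m, hm⟩ : ∃ m, l = 2 * m + 1 := by
    have := hl.odd_of_ne_two (by omega)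
    obtain ⟨k, hk⟩ := this
    exact ⟨k, by omega⟩
  have hm9 : 9 ≤ m := by omega
  -- basic facts about ζ
  have hlC : (l : ℂ) ≠ 0 := Nat.cast_ne_zero.mpr (by omega)
  have hζl : ζ ^ l = 1 := by
    rw [hζ, ← Complex.exp_nat_mul]
    have : (l : ℂ) * (2 * Real.pi * Complex.I / l) = 2 * Real.pi * Complex.I := by
      field_simp
    rw [this, Complex.exp_two_pi_mul_I]
  have hζ1 : ζ ≠ 1 := by
    rw [hζ]
    intro h
    obtain ⟨n, hn⟩ := Complex.exp_eq_one_iff.mp h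
    have h2 : 2 * (Real.pi : ℂ) * Complex.I * ((n : ℂ) * l - 1) = 0 := by
      have := congrArg (· * (l : ℂ)) hn
      field_simp at this
      linear_combination (-(2 * (Real.pi : ℂ) * Complex.I)) * this
    have hpi : (2 : ℂ) * Real.pi * Complex.I ≠ 0 := by
      simp [Real.pi_ne_zero, Complex.I_ne_zero]
    have h3 : (n : ℂ) * l = 1 := by
      have := mul_eq_zero.mp h2
      rcases this with h | h
      · exact absurd h hpi
      · linear_combination h
    have h4 : n * (l : ℤ) = 1 := by exact_mod_cast h3
    have h5 : IsUnit (l : ℤ) := IsUnit.of_mul_eq_one n (by linarith)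
    rcases Int.isUnit_iff.mp h5 with h | h <;> omega
  have habsζ : ‖ζ‖ = 1 := by
    have hz : (2 * (Real.pi : ℂ) * Complex.I / (l : ℂ))
        = ((2 * Real.pi / l : ℝ) : ℂ) * Complex.I := by push_cast; ring
    rw [hζ, hz, Complex.norm_exp_ofReal_mul_I]
  have habs : ∀ i : ℕ, ‖ζ ^ i‖ = 1 := fun i => by
    rw [norm_pow, habsζ, one_pow]
  -- sum of all roots
  have hsum0 : ∑ i ∈ Finset.range l, ζ ^ i = 0 := by
    rw [geom_sum_eq hζ1, hζl]
    simp
  have hsumIco : ∑ i ∈ Finset.Ico 1 l, ζ ^ i = -1 := by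
    have h0 : ∑ i ∈ Finset.Ico 0 l, ζ ^ i
        = ζ ^ 0 + ∑ i ∈ Finset.Ico 1 l, ζ ^ i :=
      Finset.sum_eq_sum_Ico_succ_bot (by omega) _
    rw [Finset.range_eq_Ico] at hsum0
    rw [h0] at hsum0
    simp only [pow_zero] at hsum0
    linear_combination hsum0
  haveI : NeZero l := ⟨by omega⟩
  -- predicate equivalence
  have hpred : ∀ i ∈ Finset.Ico 1 l,
      ((¬ l ∣ i ∧ ∃ a : ℕ, i ≡ a ^ 2 [MOD l]) ↔ IsSquare ((i : ZMod l))) := by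
    intro i hi
    rw [Finset.mem_Ico] at hi
    constructor
    · rintro ⟨-, a, ha⟩
      have h1 : (i : ZMod l) = ((a ^ 2 : ℕ) : ZMod l) :=
        (ZMod.natCast_eq_natCast_iff _ _ _).mpr ha
      push_cast at h1
      exact ⟨(a : ZMod l), by rw [h1, sq]⟩
    · rintro ⟨r, hr⟩
      refine ⟨fun hdvd => ?_, r.val, ?_⟩
      · have := Nat.le_of_dvd (by omega) hdvd; omega
      · have hr' : (i : ZMod l) = ((r.val ^ 2 : ℕ) : ZMod l) := by
          push_cast
          rw [ZMod.natCast_val, ZMod.cast_id, hr, sq]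
        exact (ZMod.natCast_eq_natCast_iff _ _ _).mp hr'
  set Sp := (Finset.Ico 1 l).filter (fun i => ¬ l ∣ i ∧ ∃ a : ℕ, i ≡ a ^ 2 [MOD l]) with hSp
  set Sm := (Finset.Ico 1 l).filter
      (fun i => ¬ (¬ l ∣ i ∧ ∃ a : ℕ, i ≡ a ^ 2 [MOD l])) with hSm
  have hSpeq : Sp = (Finset.Ico 1 l).filter (fun i : ℕ => IsSquare ((i : ZMod l))) := by
    rw [hSp]
    exact Finset.filter_congr hpred
  have hcard2 := aux_card_ico l hl2 (aux_card_squares l hl2)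
  have hcardSp : Sp.card = m := by
    rw [hSpeq]; omega
  have hcardtot : Sp.card + Sm.card = l - 1 := by
    rw [hSp, hSm, Finset.card_filter_add_card_filter_not, Nat.card_Ico]
  have hcardSm : Sm.card = m := by omega
  have hSsum : (∑ i ∈ Sp, ζ ^ i) + (∑ i ∈ Sm, ζ ^ i) = -1 := by
    rw [hSp, hSm, Finset.sum_filter_add_sum_filter_not]
    exact hsumIco
  -- real bounds
  set X : ℝ := ((x : ℤ) : ℝ) with hXdef
  have hXl : ((l : ℝ)) ^ 2 ≤ X := by rw [hXdef]; exact_mod_cast hx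
  have hlR : (19 : ℝ) ≤ (l : ℝ) := by exact_mod_cast hl19
  have hX361 : 361 ≤ X := by nlinarith
  have hX0 : 0 < X := by linarith
  have hxC : ((x : ℤ) : ℂ) ≠ 0 := by
    rw [Ne, Int.cast_eq_zero]
    intro h
    rw [hXdef, h] at hX0
    simp at hX0
  have habsxC : ‖((x : ℤ) : ℂ)‖ = X := by
    rw [Complex.norm_intCast]
    exact abs_of_nonneg hX0.le
  -- key estimate for each factor set
  have key : ∀ S : Finset ℕ, S.card = m →
      ‖(∏ i ∈ S, (((x : ℤ) : ℂ) - ζ ^ i)) - ((x : ℤ) : ℂ) ^ m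
        + (∑ i ∈ S, ζ ^ i) * ((x : ℤ) : ℂ) ^ (m - 1)‖
      ≤ X ^ m * ((1 + 1 / X) ^ m - 1 - m * (1 / X)) := by
    intro S hS
    set w : ℕ → ℂ := fun i => -(ζ ^ i) / ((x : ℤ) : ℂ) with hw
    have hfact : ∀ i ∈ S, ((x : ℤ) : ℂ) - ζ ^ i = ((x : ℤ) : ℂ) * (1 + w i) := by
      intro i _
      rw [hw]
      field_simp
      ring
    have hprod : ∏ i ∈ S, (((x : ℤ) : ℂ) - ζ ^ i)
        = ((x : ℤ) : ℂ) ^ m * ∏ i ∈ S, (1 + w i) := by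
      rw [Finset.prod_congr rfl hfact, Finset.prod_mul_distrib, Finset.prod_const, hS]
    have hpow : ((x : ℤ) : ℂ) ^ m = ((x : ℤ) : ℂ) ^ (m - 1) * ((x : ℤ) : ℂ) := by
      rw [← pow_succ]; congr 1; omega
    have hsumw : ∑ i ∈ S, w i = -(∑ i ∈ S, ζ ^ i) / ((x : ℤ) : ℂ) := by
      rw [hw]
      simp [neg_div, Finset.sum_div]
    have heq : (∏ i ∈ S, (((x : ℤ) : ℂ) - ζ ^ i)) - ((x : ℤ) : ℂ) ^ m
        + (∑ i ∈ S, ζ ^ i) * ((x : ℤ) : ℂ) ^ (m - 1)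
        = ((x : ℤ) : ℂ) ^ m * ((∏ i ∈ S, (1 + w i)) - 1 - ∑ i ∈ S, w i) := by
      rw [hprod, hsumw, hpow]
      field_simp
      ring
    rw [heq, norm_mul, norm_pow, habsxC]
    have habsw : ∀ i ∈ S, ‖w i‖ = 1 / X := by
      intro i _
      rw [hw]
      simp only []
      rw [norm_div, norm_neg, habs i, habsxC]
    have hb := aux_prod_sub_sum S w
    have hb1 : ∏ i ∈ S, (1 + ‖w i‖) = (1 + 1 / X) ^ m := by
      rw [Finset.prod_congr rfl (fun i hi => by rw [habsw i hi]), Finset.prod_const, hS]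
    have hb2 : ∑ i ∈ S, ‖w i‖ = m * (1 / X) := by
      rw [Finset.sum_congr rfl (fun i hi => habsw i hi), Finset.sum_const, hS,
        nsmul_eq_mul]
    rw [hb1, hb2] at hb
    exact mul_le_mul_of_nonneg_left hb (by positivity)
  -- exponents
  have e1 : (l - 1) / 2 = m := by omega
  have e2 : (l - 3) / 2 = m - 1 := by omega
  rw [hψp x, hψm x, e1, e2]
  have hsplit : (∏ i ∈ Sp, (((x : ℤ) : ℂ) - ζ ^ i)) + (∏ i ∈ Sm, (((x : ℤ) : ℂ) - ζ ^ i))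
      - 2 * ((x : ℤ) : ℂ) ^ m - ((x : ℤ) : ℂ) ^ (m - 1)
      = ((∏ i ∈ Sp, (((x : ℤ) : ℂ) - ζ ^ i)) - ((x : ℤ) : ℂ) ^ m
          + (∑ i ∈ Sp, ζ ^ i) * ((x : ℤ) : ℂ) ^ (m - 1))
      + ((∏ i ∈ Sm, (((x : ℤ) : ℂ) - ζ ^ i)) - ((x : ℤ) : ℂ) ^ m
          + (∑ i ∈ Sm, ζ ^ i) * ((x : ℤ) : ℂ) ^ (m - 1)) := by
    linear_combination (-(((x : ℤ) : ℂ) ^ (m - 1))) * hSsum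
  rw [hsplit]
  -- numeric bounds
  have hmX : (m : ℝ) * (1 / X) ≤ 1 := by
    rw [mul_one_div, div_le_one hX0]
    have : (m : ℝ) ≤ (l : ℝ) := by exact_mod_cast (by omega : m ≤ l)
    nlinarith
  have hple := aux_pow_le (1 / X) (by positivity) m hmX
  have hbd : X ^ m * ((1 + 1 / X) ^ m - 1 - m * (1 / X))
      ≤ X ^ m * ((m : ℝ) ^ 2 * (1 / X) ^ 2) := by
    apply mul_le_mul_of_nonneg_left _ (by positivity)
    linarith
  have hXpow : X ^ m = X ^ (m - 1) * X := by
    rw [← pow_succ]; congr 1; omega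
  have h4m : 4 * (m : ℝ) ^ 2 < X := by
    have : ((l : ℝ)) = 2 * m + 1 := by exact_mod_cast congrArg (Nat.cast : ℕ → ℝ) hm
    nlinarith
  have hfinal : 2 * (X ^ m * ((m : ℝ) ^ 2 * (1 / X) ^ 2)) < X ^ (m - 1) / 2 := by
    have hXm1 : (0 : ℝ) < X ^ (m - 1) := pow_pos hX0 _
    have hrw : 2 * (X ^ m * ((m : ℝ) ^ 2 * (1 / X) ^ 2))
        = X ^ (m - 1) * (2 * (m : ℝ) ^ 2 / X) := by
      rw [hXpow]
      field_simp
    rw [hrw]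
    have h2 : 2 * (m : ℝ) ^ 2 / X < 1 / 2 := by
      rw [div_lt_iff₀ hX0]
      nlinarith
    calc X ^ (m - 1) * (2 * (m : ℝ) ^ 2 / X) < X ^ (m - 1) * (1 / 2) := by
          exact mul_lt_mul_of_pos_left h2 hXm1
      _ = X ^ (m - 1) / 2 := by ring
  calc ‖_‖
      ≤ ‖(∏ i ∈ Sp, (((x : ℤ) : ℂ) - ζ ^ i)) - ((x : ℤ) : ℂ) ^ m
          + (∑ i ∈ Sp, ζ ^ i) * ((x : ℤ) : ℂ) ^ (m - 1)‖
        + ‖(∏ i ∈ Sm, (((x : ℤ) : ℂ) - ζ ^ i)) - ((x : ℤ) : ℂ) ^ m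
          + (∑ i ∈ Sm, ζ ^ i) * ((x : ℤ) : ℂ) ^ (m - 1)‖ := norm_add_le _ _
    _ ≤ X ^ m * ((1 + 1 / X) ^ m - 1 - m * (1 / X))
        + X ^ m * ((1 + 1 / X) ^ m - 1 - m * (1 / X)) :=
        add_le_add (key Sp hcardSp) (key Sm hcardSm)
    _ = 2 * (X ^ m * ((1 + 1 / X) ^ m - 1 - m * (1 / X))) := by ring
    _ ≤ 2 * (X ^ m * ((m : ℝ) ^ 2 * (1 / X) ^ 2)) :=
        mul_le_mul_of_nonneg_left hbd (by norm_num)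
    _ < X ^ (m - 1) / 2 := hfinal
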